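/- arXiv:1901.01645 — 2 statements merged into one kernel-verified Lean document; each statement's English description precedes it below -/
import Mathlib

section
/- Strong consistency of the Horvitz–Thompson variance estimator under Poisson sampling: assume there are constants α ∈ (1/2,1], 0 < C_1 ≤ C_2 with n_0 ≍ N^α and C_1 ≤ N π_{N,i}/n_0 ≤ C_2 for all i, and sup_N N^{-1} Σ_{i=1}^N y_{N,i}^8 < ∞. Then (n_0/N^2)(V̂_N − V_N) → 0 almost surely, where V̂_N = Σ_i y_{N,i}^2(1−π_{N,i})π_{N,i}^{-2} I_{N,i} and V_N = Σ_i y_{N,i}^2(1−π_{N,i})π_{N,i}^{-1}, and the I_{N,i} are independent Bernoulli(π_{N,i}), independently across N. -/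
open MeasureTheory ProbabilityTheory Filter



lemma iIndepFun_precomp {ι κ' Ω : Type*} {mΩ : MeasurableSpace Ω} {μ : Measure Ω}
    {β : Type*} [mβ : MeasurableSpace β] {f : ι → Ω → β} {g : κ' → ι}
    (hg : Function.Injective g)
    (h : iIndepFun f μ) :
    iIndepFun (fun j => f (g j)) μ := by
  classical
  rw [iIndepFun_iff_measure_inter_preimage_eq_mul] at h ⊢
  intro S sets hsets
  set sets' : ι → Set β := fun i =>
    if h' : ∃ j, j ∈ S ∧ g j = i then sets h'.choose else Set.univ with hsets'def
  have hkey : ∀ j ∈ S, sets' (g j) = sets j := by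
    intro j hj
    have h' : ∃ j', j' ∈ S ∧ g j' = g j := ⟨j, hj, rfl⟩
    have := h'.choose_spec
    have hj' : h'.choose = j := hg this.2
    simp only [hsets'def, dif_pos h', hj']
  have hmeas' : ∀ i ∈ S.map ⟨g, hg⟩, MeasurableSet (sets' i) := by
    intro i hi
    rw [Finset.mem_map] at hi
    obtain ⟨j, hj, rfl⟩ := hi
    rw [Function.Embedding.coeFn_mk, hkey j hj]
    exact hsets j hj
  have key := h (S.map ⟨g, hg⟩) hmeas'
  have h1 : (⋂ i ∈ S.map ⟨g, hg⟩, f i ⁻¹' sets' i) = ⋂ j ∈ S, f (g j) ⁻¹' sets j := by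
    ext x
    simp only [Set.mem_iInter, Finset.mem_map, Function.Embedding.coeFn_mk]
    constructor
    · intro hx j hj
      have := hx (g j) ⟨j, hj, rfl⟩
      rwa [hkey j hj] at this
    · rintro hx i ⟨j, hj, rfl⟩
      rw [hkey j hj]; exact hx j hj
  have h2 : (∏ i ∈ S.map ⟨g, hg⟩, μ (f i ⁻¹' sets' i)) = ∏ j ∈ S, μ (f (g j) ⁻¹' sets j) := by
    rw [Finset.prod_map]
    exact Finset.prod_congr rfl fun j hj => by rw [Function.Embedding.coeFn_mk, hkey j hj]
  rw [h1, h2] at key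
  exact key

lemma integrable_of_bdd {Ω : Type*} [MeasureSpace Ω] [IsProbabilityMeasure (ℙ : Measure Ω)]
    {f : Ω → ℝ} {c : ℝ} (hm : Measurable f) (hb : ∀ ω, |f ω| ≤ c) :
    Integrable f ℙ :=
  (integrable_const c).mono' hm.aestronglyMeasurable
    (Filter.Eventually.of_forall fun ω => by simpa [Real.norm_eq_abs] using hb ω)

lemma exp_le_one_add_sq {x : ℝ} (hx : |x| ≤ 1) : Real.exp x ≤ 1 + x + x ^ 2 := by
  have h := Real.exp_bound hx (n := 2) (by norm_num)
  have h2 : (∑ m ∈ Finset.range 2, x ^ m / m.factorial) = 1 + x := by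
    simp [Finset.sum_range_succ]
  rw [h2] at h
  have h3 := (abs_sub_le_iff.1 h).1
  rw [sq_abs] at h3
  norm_num [Nat.factorial] at h3
  nlinarith [h3, sq_nonneg x]

lemma chernoff_aux {Ω : Type*} [MeasureSpace Ω] [IsProbabilityMeasure (ℙ : Measure Ω)]
    {n : ℕ} (X : Fin n → Ω → ℝ) (b : Fin n → ℝ)
    (hmeas : ∀ i, Measurable (X i))
    (hindep : iIndepFun X ℙ)
    (hbdd : ∀ i ω, |X i ω| ≤ b i)
    (hmean : ∀ i, ∫ ω, X i ω = 0)
    {t : ℝ} (ht : 0 ≤ t) (htb : ∀ i, t * b i ≤ 1)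
    {v : ℝ} (hv : ∑ i, ∫ ω, (X i ω) ^ 2 ≤ v) (ε : ℝ) :
    (ℙ {ω | ε ≤ ∑ i, X i ω}).toReal ≤ Real.exp (-t * ε + t ^ 2 * v) := by
  have hXint : ∀ i, Integrable (X i) ℙ := fun i => integrable_of_bdd (hmeas i) (hbdd i)
  have hX2int : ∀ i, Integrable (fun ω => (X i ω) ^ 2) ℙ := fun i =>
    integrable_of_bdd ((hmeas i).pow_const 2) (fun ω => by
      rw [abs_pow, sq_abs, ← sq_abs]
      exact pow_le_pow_left₀ (abs_nonneg _) (hbdd i ω) 2)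
  -- integrability of exp(t * X i)
  have hexpint : ∀ i, Integrable (fun ω => Real.exp (t * X i ω)) ℙ := by
    intro i
    refine integrable_of_bdd (c := Real.exp (t * b i)) (((hmeas i).const_mul t).exp) (fun ω => ?_)
    rw [abs_of_nonneg (Real.exp_nonneg _)]
    refine Real.exp_le_exp.2 ?_
    calc t * X i ω ≤ t * |X i ω| := mul_le_mul_of_nonneg_left (le_abs_self _) ht
      _ ≤ t * b i := mul_le_mul_of_nonneg_left (hbdd i ω) ht
  -- the sum is measurable and bounded
  have hSmeas : Measurable (fun ω => ∑ i, X i ω) := by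
    exact Finset.measurable_sum _ fun i _ => hmeas i
  have hSexp : Integrable (fun ω => Real.exp (t * ∑ i, X i ω)) ℙ := by
    refine integrable_of_bdd ((hSmeas.const_mul t).exp) (c := Real.exp (t * ∑ i, b i)) fun ω => ?_
    rw [abs_of_nonneg (Real.exp_nonneg _)]
    refine Real.exp_le_exp.2 (mul_le_mul_of_nonneg_left ?_ ht)
    calc (∑ i, X i ω) ≤ ∑ i, |X i ω| := Finset.sum_le_sum fun i _ => le_abs_self _
      _ ≤ ∑ i, b i := Finset.sum_le_sum fun i _ => hbdd i ω
  have hsum_eq : (fun ω => ∑ i, X i ω) = ∑ i, X i := by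
    ext ω; simp [Finset.sum_apply]
  have step1 : (ℙ {ω | ε ≤ ∑ i, X i ω}).toReal ≤
      Real.exp (-t * ε) * mgf (∑ i, X i) ℙ t := by
    have := measure_ge_le_exp_mul_mgf (μ := ℙ) (X := fun ω => ∑ i, X i ω) ε ht hSexp
    rw [hsum_eq] at this
    simpa [Finset.sum_apply, Measure.real] using this
  have step2 : mgf (∑ i, X i) ℙ t = ∏ i, mgf (X i) ℙ t :=
    hindep.mgf_sum hmeas Finset.univ
  have step3 : ∀ i, mgf (X i) ℙ t ≤ Real.exp (t ^ 2 * ∫ ω, (X i ω) ^ 2) := by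
    intro i
    have hptw : ∀ ω, Real.exp (t * X i ω) ≤ 1 + t * X i ω + (t * X i ω) ^ 2 := by
      intro ω
      refine exp_le_one_add_sq ?_
      rw [abs_mul, abs_of_nonneg ht]
      exact le_trans (mul_le_mul_of_nonneg_left (hbdd i ω) ht) (htb i)
    have hint : ∫ ω, (1 + t * X i ω + (t * X i ω) ^ 2) ∂ℙ
        = 1 + t ^ 2 * ∫ ω, (X i ω) ^ 2 := by
      have h1 : Integrable (fun ω => (1:ℝ) + t * X i ω) ℙ :=
        (integrable_const 1).add ((hXint i).const_mul t)
      have h2 : Integrable (fun ω => (t * X i ω) ^ 2) ℙ := by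
        simpa [mul_pow] using (hX2int i).const_mul (t ^ 2)
      rw [integral_add h1 h2, integral_add (integrable_const 1) ((hXint i).const_mul t),
        integral_const_mul, hmean i]
      simp [mul_pow, integral_const_mul]
    have hle : mgf (X i) ℙ t ≤ 1 + t ^ 2 * ∫ ω, (X i ω) ^ 2 := by
      rw [mgf, ← hint]
      refine integral_mono (hexpint i) ?_ hptw
      exact ((integrable_const 1).add ((hXint i).const_mul t)).add
        (by simpa [mul_pow] using (hX2int i).const_mul (t ^ 2))
    exact hle.trans (by linarith [Real.add_one_le_exp (t ^ 2 * ∫ ω, (X i ω) ^ 2)])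
  have step4 : (∏ i, mgf (X i) ℙ t) ≤ Real.exp (t ^ 2 * ∑ i, ∫ ω, (X i ω) ^ 2) := by
    rw [Finset.mul_sum, Real.exp_sum]
    exact Finset.prod_le_prod (fun i _ => mgf_nonneg) fun i _ => step3 i
  calc (ℙ {ω | ε ≤ ∑ i, X i ω}).toReal
      ≤ Real.exp (-t * ε) * mgf (∑ i, X i) ℙ t := step1
    _ ≤ Real.exp (-t * ε) * Real.exp (t ^ 2 * ∑ i, ∫ ω, (X i ω) ^ 2) := by
        rw [step2]; exact mul_le_mul_of_nonneg_left step4 (Real.exp_nonneg _)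
    _ ≤ Real.exp (-t * ε + t ^ 2 * v) := by
        rw [← Real.exp_add]
        exact Real.exp_le_exp.2 (by nlinarith [sq_nonneg t])

lemma single_N {Ω : Type*} [MeasureSpace Ω] [IsProbabilityMeasure (ℙ : Measure Ω)]
    {n : ℕ} (I : Fin n → Ω → ℝ) (π : Fin n → ℝ) (b : Fin n → ℝ)
    (hmeas : ∀ i, Measurable (I i))
    (h01 : ∀ i ω, I i ω = 0 ∨ I i ω = 1)
    (hmean : ∀ i, ∫ ω, I i ω = π i)
    (hπ : ∀ i, π i ∈ Set.Ioo (0:ℝ) 1)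
    (hindep : iIndepFun I ℙ)
    (hb : ∀ i, 0 ≤ b i)
    {t v : ℝ} (ht : 0 ≤ t) (htb : ∀ i, t * b i ≤ 1)
    (hv : ∑ i, b i ^ 2 * π i ≤ v) (ε : ℝ) :
    ℙ {ω | ε ≤ |∑ i, b i * (I i ω - π i)|} ≤
      ENNReal.ofReal (2 * Real.exp (-t * ε + t ^ 2 * v)) := by
  set X : Fin n → Ω → ℝ := fun i ω => b i * (I i ω - π i) with hX
  set Y : Fin n → Ω → ℝ := fun i ω => b i * (π i - I i ω) with hY
  have hXmeas : ∀ i, Measurable (X i) := fun i => ((hmeas i).sub_const _).const_mul _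
  have hYmeas : ∀ i, Measurable (Y i) := fun i => ((measurable_const.sub (hmeas i))).const_mul _
  have hIabs : ∀ i ω, |I i ω - π i| ≤ 1 := by
    intro i ω
    rcases h01 i ω with h | h <;> rw [h] <;> rw [abs_le] <;>
      constructor <;> nlinarith [(hπ i).1, (hπ i).2]
  have hXbdd : ∀ i ω, |X i ω| ≤ b i := by
    intro i ω
    rw [hX, abs_mul, abs_of_nonneg (hb i)]
    nlinarith [hIabs i ω, hb i, abs_nonneg (I i ω - π i)]
  have hYbdd : ∀ i ω, |Y i ω| ≤ b i := by
    intro i ω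
    have : |Y i ω| = |X i ω| := by rw [hX, hY]; simp [abs_mul, abs_sub_comm]
    rw [this]; exact hXbdd i ω
  have hIint : ∀ i, Integrable (I i) ℙ := fun i =>
    integrable_of_bdd (hmeas i) (c := 1) (fun ω => by
      rcases h01 i ω with h | h <;> rw [h] <;> norm_num)
  have hXmean : ∀ i, ∫ ω, X i ω = 0 := by
    intro i
    rw [hX]
    simp only
    rw [integral_const_mul, integral_sub (hIint i) (integrable_const _), hmean i,
      integral_const]
    simp
  have hYmean : ∀ i, ∫ ω, Y i ω = 0 := by
    intro i
    rw [hY]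
    simp only
    rw [integral_const_mul, integral_sub (integrable_const _) (hIint i), hmean i,
      integral_const]
    simp
  have hXindep : iIndepFun X ℙ := by
    have := hindep.comp (fun i (x : ℝ) => b i * (x - π i))
      (fun i => (measurable_id.sub_const _).const_mul _)
    exact this
  have hYindep : iIndepFun Y ℙ := by
    have := hindep.comp (fun i (x : ℝ) => b i * (π i - x))
      (fun i => (measurable_const.sub measurable_id).const_mul _)
    exact this
  have hsq : ∀ i, (∫ ω, (X i ω) ^ 2) = b i ^ 2 * (π i - π i ^ 2) := by
    intro i
    have hI2 : ∀ ω, (I i ω - π i) ^ 2 = (1 - 2 * π i) * I i ω + π i ^ 2 := by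
      intro ω
      rcases h01 i ω with h | h <;> rw [h] <;> ring
    have : ∀ ω, (X i ω) ^ 2 = b i ^ 2 * ((1 - 2 * π i) * I i ω + π i ^ 2) := by
      intro ω; rw [hX]; simp only; rw [mul_pow, hI2 ω]
    simp only [this]
    rw [integral_const_mul, integral_add ((hIint i).const_mul _) (integrable_const _),
      integral_const_mul, hmean i, integral_const]
    simp only [measure_univ, ENNReal.toReal_one, probReal_univ, smul_eq_mul, one_mul]
    ring
  have hXv : ∑ i, ∫ ω, (X i ω) ^ 2 ≤ v := by
    refine le_trans (Finset.sum_le_sum fun i _ => ?_) hv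
    rw [hsq i]
    nlinarith [sq_nonneg (b i), (hπ i).1, (hπ i).2, sq_nonneg (π i)]
  have hYsq : ∀ i ω, (Y i ω) ^ 2 = (X i ω) ^ 2 := by
    intro i ω; rw [hX, hY]; ring
  have hYv : ∑ i, ∫ ω, (Y i ω) ^ 2 ≤ v := by
    simp only [hYsq]; exact hXv
  have tail1 := chernoff_aux X b hXmeas hXindep hXbdd hXmean ht htb hXv ε
  have tail2 := chernoff_aux Y b hYmeas hYindep hYbdd hYmean ht htb hYv ε
  have hsub : {ω | ε ≤ |∑ i, X i ω|} ⊆ {ω | ε ≤ ∑ i, X i ω} ∪ {ω | ε ≤ ∑ i, Y i ω} := by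
    intro ω hω
    simp only [Set.mem_setOf_eq] at hω
    rcases le_abs.1 hω with h | h
    · exact Or.inl h
    · refine Or.inr ?_
      simp only [Set.mem_setOf_eq]
      have : (∑ i, Y i ω) = -∑ i, X i ω := by
        rw [← Finset.sum_neg_distrib]
        exact Finset.sum_congr rfl fun i _ => by rw [hX, hY]; ring
      rw [this]; exact h
  have hmeasset1 : MeasurableSet {ω | ε ≤ ∑ i, X i ω} :=
    measurableSet_le measurable_const (Finset.measurable_sum _ fun i _ => hXmeas i)
  have hne1 : ℙ {ω | ε ≤ ∑ i, X i ω} ≠ ⊤ := measure_ne_top _ _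
  have hne2 : ℙ {ω | ε ≤ ∑ i, Y i ω} ≠ ⊤ := measure_ne_top _ _
  calc ℙ {ω | ε ≤ |∑ i, X i ω|}
      ≤ ℙ ({ω | ε ≤ ∑ i, X i ω} ∪ {ω | ε ≤ ∑ i, Y i ω}) := measure_mono hsub
    _ ≤ ℙ {ω | ε ≤ ∑ i, X i ω} + ℙ {ω | ε ≤ ∑ i, Y i ω} := measure_union_le _ _
    _ ≤ ENNReal.ofReal (Real.exp (-t * ε + t ^ 2 * v)) +
        ENNReal.ofReal (Real.exp (-t * ε + t ^ 2 * v)) := by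
        gcongr
        · exact (ENNReal.le_ofReal_iff_toReal_le hne1 (Real.exp_nonneg _)).2 tail1
        · exact (ENNReal.le_ofReal_iff_toReal_le hne2 (Real.exp_nonneg _)).2 tail2
    _ = ENNReal.ofReal (2 * Real.exp (-t * ε + t ^ 2 * v)) := by
        rw [← ENNReal.ofReal_add (Real.exp_nonneg _) (Real.exp_nonneg _)]
        ring_nf

set_option maxHeartbeats 8000000 in
/-- Strong consistency of the Horvitz–Thompson variance estimator under Poisson
sampling: if `n₀ ≍ N ^ α` with `α ∈ (1/2, 1]`, `C₁ ≤ N * π_{N,i} / n₀ ≤ C₂` for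
all `i`, and the eighth population moments are uniformly bounded, then
`(n₀ / N²) * (V̂_N - V_N) → 0` almost surely, where the `I_{N,i}` are independent
Bernoulli(`π_{N,i}`) indicators, independently across `N`. -/
theorem poisson_variance_estimator_strong_consistency
    {Ω : Type*} [MeasureSpace Ω] [IsProbabilityMeasure (ℙ : Measure Ω)]
    (y π : (N : ℕ) → Fin N → ℝ) (I : (N : ℕ) → Fin N → Ω → ℝ)
    (hπ : ∀ N i, π N i ∈ Set.Ioo (0 : ℝ) 1)
    (hmeas : ∀ N i, Measurable (I N i))
    (h01 : ∀ N i ω, I N i ω = 0 ∨ I N i ω = 1)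
    (hmean : ∀ N i, ∫ ω, I N i ω = π N i)
    (hindep : iIndepFun
      (fun p : (Σ N : ℕ, Fin N) => I p.1 p.2) ℙ)
    (n₀ : ℕ → ℝ) (hn₀ : ∀ N, n₀ N = ∑ i, π N i)
    (α : ℝ) (hα : α ∈ Set.Ioc (1 / 2 : ℝ) 1)
    (c₁ c₂ : ℝ) (hc₁ : 0 < c₁)
    (hasymp : ∀ N : ℕ, 1 ≤ N → c₁ * (N : ℝ) ^ α ≤ n₀ N ∧ n₀ N ≤ c₂ * (N : ℝ) ^ α)
    (C₁ C₂ : ℝ) (hC₁ : 0 < C₁) (hC₁₂ : C₁ ≤ C₂)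
    (hbound : ∀ N : ℕ, 1 ≤ N → ∀ i,
      C₁ ≤ (N : ℝ) * π N i / n₀ N ∧ (N : ℝ) * π N i / n₀ N ≤ C₂)
    (M : ℝ) (hM : ∀ N : ℕ, 1 ≤ N → (N : ℝ)⁻¹ * ∑ i, (y N i) ^ 8 ≤ M) :
    ∀ᵐ ω ∂(ℙ : Measure Ω),
      Tendsto (fun N : ℕ =>
          n₀ N / (N : ℝ) ^ 2 *
            ((∑ i, (y N i) ^ 2 * (1 - π N i) * ((π N i)⁻¹) ^ 2 * I N i ω)
              - ∑ i, (y N i) ^ 2 * (1 - π N i) * (π N i)⁻¹))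
        atTop (nhds 0) := by
  set S : ℕ → Ω → ℝ := fun N ω =>
    n₀ N / (N : ℝ) ^ 2 *
      ((∑ i, (y N i) ^ 2 * (1 - π N i) * ((π N i)⁻¹) ^ 2 * I N i ω)
        - ∑ i, (y N i) ^ 2 * (1 - π N i) * (π N i)⁻¹) with hSdef
  set b : (N : ℕ) → Fin N → ℝ := fun N i =>
    n₀ N / (N : ℝ) ^ 2 * ((y N i) ^ 2 * (1 - π N i) * ((π N i)⁻¹) ^ 2) with hbdef
  have hSsum : ∀ N ω, S N ω = ∑ i, b N i * (I N i ω - π N i) := by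
    intro N ω
    rw [hSdef]
    simp only
    rw [← Finset.sum_sub_distrib, Finset.mul_sum]
    refine Finset.sum_congr rfl fun i _ => ?_
    have hπne : π N i ≠ 0 := ne_of_gt (hπ N i).1
    have h2 : (y N i) ^ 2 * (1 - π N i) * (π N i)⁻¹
        = (y N i) ^ 2 * (1 - π N i) * ((π N i)⁻¹) ^ 2 * π N i := by
      field_simp
    rw [h2, hbdef]
    ring
  set M' : ℝ := max M 1 with hM'def
  have hM'1 : (1:ℝ) ≤ M' := le_max_right _ _
  have hM'0 : (0:ℝ) < M' := lt_of_lt_of_le one_pos hM'1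
  have hC₂ : 0 < C₂ := lt_of_lt_of_le hC₁ hC₁₂
  set D : ℝ := C₂ * Real.sqrt M' / (C₁ ^ 4 * c₁) with hDdef
  have hD : 0 < D :=
    div_pos (mul_pos hC₂ (Real.sqrt_pos.2 hM'0)) (mul_pos (by positivity) hc₁)
  set E : ℝ := M' ^ ((1:ℝ)/4) / (C₁ ^ 2 * c₁) with hEdef
  have hE : 0 < E :=
    div_pos (Real.rpow_pos_of_pos hM'0 _) (mul_pos (by positivity) hc₁)
  -- the key tail bound
  have key : ∀ ε : ℝ, 0 < ε → ∀ N : ℕ, 1 ≤ N →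
      ℙ {ω | ε ≤ |S N ω|} ≤ ENNReal.ofReal
        (2 * Real.exp (-(ε * min (ε / (2 * D)) (1 / E) / 2) * (N:ℝ) ^ ((1:ℝ)/4))) := by
    intro ε hε N hN
    have hN1 : (1:ℝ) ≤ (N:ℝ) := by exact_mod_cast hN
    have hNpos : (0:ℝ) < (N:ℝ) := lt_of_lt_of_le one_pos hN1
    have hn₀pos : 0 < n₀ N := by
      rw [hn₀]
      exact Finset.sum_pos (fun i _ => (hπ N i).1) ⟨⟨0, hN⟩, Finset.mem_univ _⟩
    set A : ℝ := (N:ℝ) ^ α with hAdef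
    have hApos : 0 < A := Real.rpow_pos_of_pos hNpos _
    have hA1 : 1 ≤ A := Real.one_le_rpow hN1 (by linarith [hα.1])
    set Q : ℝ := (N:ℝ) ^ ((1:ℝ)/4) with hQdef
    have hQpos : 0 < Q := Real.rpow_pos_of_pos hNpos _
    have hQ1 : 1 ≤ Q := Real.one_le_rpow hN1 (by norm_num)
    have hQsq : Q ^ 2 = (N:ℝ) ^ ((1:ℝ)/2) := by
      rw [hQdef, ← Real.rpow_natCast ((N:ℝ) ^ ((1:ℝ)/4)) 2, ← Real.rpow_mul hNpos.le]
      norm_num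
    have hQ2A : Q ^ 2 ≤ A := by
      rw [hQsq, hAdef]
      exact Real.rpow_le_rpow_of_exponent_le hN1 (le_of_lt hα.1)
    have hQA : Q ≤ A := by
      rw [hQdef, hAdef]
      exact Real.rpow_le_rpow_of_exponent_le hN1 (by linarith [hα.1])
    have hn₀A : c₁ * A ≤ n₀ N := (hasymp N hN).1
    have hπlb : ∀ i, C₁ * n₀ N ≤ π N i * (N:ℝ) := by
      intro i
      have h := (hbound N hN i).1
      rw [le_div_iff₀ hn₀pos] at h
      nlinarith
    have hπub : ∀ i, π N i * (N:ℝ) ≤ C₂ * n₀ N := by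
      intro i
      have h := (hbound N hN i).2
      rw [div_le_iff₀ hn₀pos] at h
      nlinarith
    have hbnn : ∀ i, 0 ≤ b N i := by
      intro i
      simp only [hbdef]
      have h1 := (hπ N i).2
      have h2 : (0:ℝ) ≤ 1 - π N i := by linarith
      exact mul_nonneg (div_nonneg hn₀pos.le (sq_nonneg _))
        (mul_nonneg (mul_nonneg (sq_nonneg _) h2) (sq_nonneg _))
    have hble : ∀ i, b N i ≤ (y N i) ^ 2 / (C₁ ^ 2 * n₀ N) := by
      intro i
      have hP0 : 0 < π N i := (hπ N i).1
      have hP1 : π N i < 1 := (hπ N i).2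
      have hPinv' : (π N i)⁻¹ * (C₁ * n₀ N) ≤ (N:ℝ) := by
        calc (π N i)⁻¹ * (C₁ * n₀ N) ≤ (π N i)⁻¹ * (π N i * (N:ℝ)) :=
              mul_le_mul_of_nonneg_left (hπlb i) (inv_nonneg.2 hP0.le)
          _ = (N:ℝ) := by field_simp
      have hsq : ((π N i)⁻¹ * (C₁ * n₀ N)) ^ 2 ≤ (N:ℝ) ^ 2 :=
        pow_le_pow_left₀ (mul_nonneg (inv_nonneg.2 hP0.le) (mul_pos hC₁ hn₀pos).le) hPinv' 2
      have t1 : (y N i) ^ 2 * ((π N i)⁻¹ * (C₁ * n₀ N)) ^ 2 ≤ (y N i) ^ 2 * (N:ℝ) ^ 2 :=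
        mul_le_mul_of_nonneg_left hsq (sq_nonneg _)
      have h2 : (0:ℝ) ≤ 1 - π N i := by linarith
      simp only [hbdef]
      rw [div_mul_eq_mul_div, div_le_div_iff₀ (pow_pos hNpos 2)
        (mul_pos (pow_pos hC₁ 2) hn₀pos)]
      calc n₀ N * ((y N i) ^ 2 * (1 - π N i) * ((π N i)⁻¹) ^ 2) * (C₁ ^ 2 * n₀ N)
          = (1 - π N i) * ((y N i) ^ 2 * ((π N i)⁻¹ * (C₁ * n₀ N)) ^ 2) := by ring
        _ ≤ 1 * ((y N i) ^ 2 * ((π N i)⁻¹ * (C₁ * n₀ N)) ^ 2) := by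
            refine mul_le_mul_of_nonneg_right (by linarith) ?_
            exact mul_nonneg (sq_nonneg _) (sq_nonneg _)
        _ = (y N i) ^ 2 * ((π N i)⁻¹ * (C₁ * n₀ N)) ^ 2 := one_mul _
        _ ≤ (y N i) ^ 2 * (N:ℝ) ^ 2 := t1
    have hy8 : ∀ i, (y N i) ^ 8 ≤ (N:ℝ) * M' := by
      intro i
      have h := hM N hN
      rw [inv_mul_le_iff₀ hNpos] at h
      have hsingle : (y N i) ^ 8 ≤ ∑ j, (y N j) ^ 8 :=
        Finset.single_le_sum (f := fun j => (y N j) ^ 8)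
          (fun j _ => by positivity) (Finset.mem_univ i)
      have : (N:ℝ) * M ≤ (N:ℝ) * M' :=
        mul_le_mul_of_nonneg_left (le_max_left _ _) hNpos.le
      linarith
    have hy2 : ∀ i, (y N i) ^ 2 ≤ M' ^ ((1:ℝ)/4) * Q := by
      intro i
      have h4 : (M' ^ ((1:ℝ)/4) * Q) ^ (4:ℕ) = M' * (N:ℝ) := by
        rw [mul_pow, hQdef, ← Real.rpow_natCast (M' ^ ((1:ℝ)/4)) 4,
          ← Real.rpow_natCast ((N:ℝ) ^ ((1:ℝ)/4)) 4,
          ← Real.rpow_mul hM'0.le, ← Real.rpow_mul hNpos.le]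
        norm_num
      refine le_of_pow_le_pow_left₀ (n := 4) (by norm_num)
        (mul_nonneg (Real.rpow_nonneg hM'0.le _) hQpos.le) ?_
      rw [h4]
      calc ((y N i) ^ 2) ^ (4:ℕ) = (y N i) ^ 8 := by ring
        _ ≤ (N:ℝ) * M' := hy8 i
        _ = M' * (N:ℝ) := mul_comm _ _
    have hbQle : ∀ i, b N i ≤ E * Q / A := by
      intro i
      refine (hble i).trans ?_
      have h1 : (y N i) ^ 2 / (C₁ ^ 2 * n₀ N) ≤ (M' ^ ((1:ℝ)/4) * Q) / (C₁ ^ 2 * (c₁ * A)) := by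
        refine div_le_div₀ (mul_nonneg (Real.rpow_nonneg hM'0.le _) hQpos.le) (hy2 i)
          (mul_pos (pow_pos hC₁ 2) (mul_pos hc₁ hApos)) ?_
        nlinarith [pow_pos hC₁ 2]
      refine h1.trans (le_of_eq ?_)
      rw [hEdef]
      field_simp
    have hsum4 : ∑ i, (y N i) ^ 4 ≤ (N:ℝ) * Real.sqrt M' := by
      have hcs := Finset.sum_mul_sq_le_sq_mul_sq Finset.univ
        (fun _ : Fin N => (1:ℝ)) (fun i => (y N i) ^ 4)
      simp only [one_pow, one_mul, Finset.sum_const, Finset.card_univ,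
        Fintype.card_fin, nsmul_eq_mul, mul_one] at hcs
      have hy8sum : ∑ j, ((y N j) ^ 4) ^ 2 ≤ (N:ℝ) * M' := by
        have h := hM N hN
        rw [inv_mul_le_iff₀ hNpos] at h
        have : ∑ j, ((y N j) ^ 4) ^ 2 = ∑ j, (y N j) ^ 8 :=
          Finset.sum_congr rfl fun j _ => by ring
        rw [this]
        nlinarith [mul_le_mul_of_nonneg_left (le_max_left M 1) hNpos.le]
      have hb2 : (∑ i, (y N i) ^ 4) ^ 2 ≤ ((N:ℝ) * Real.sqrt M') ^ 2 := by
        have hsq : ((N:ℝ) * Real.sqrt M') ^ 2 = (N:ℝ) ^ 2 * M' := by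
          rw [mul_pow, Real.sq_sqrt hM'0.le]
        rw [hsq]
        calc (∑ i, (y N i) ^ 4) ^ 2 ≤ (N:ℝ) * ∑ j, ((y N j) ^ 4) ^ 2 := hcs
          _ ≤ (N:ℝ) * ((N:ℝ) * M') := mul_le_mul_of_nonneg_left hy8sum hNpos.le
          _ = (N:ℝ) ^ 2 * M' := by ring
      have hnn : (0:ℝ) ≤ ∑ i, (y N i) ^ 4 :=
        Finset.sum_nonneg fun i _ => by positivity
      nlinarith [hb2, hnn, mul_nonneg hNpos.le (Real.sqrt_nonneg M')]
    have hv : ∑ i, b N i ^ 2 * π N i ≤ D / A := by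
      have h1 : ∀ i ∈ Finset.univ, b N i ^ 2 * π N i
          ≤ (C₂ / (C₁ ^ 4 * n₀ N * (N:ℝ))) * (y N i) ^ 4 := by
        intro i _
        have hbsq : b N i ^ 2 ≤ ((y N i) ^ 2 / (C₁ ^ 2 * n₀ N)) ^ 2 :=
          pow_le_pow_left₀ (hbnn i) (hble i) 2
        have hπi : π N i ≤ C₂ * n₀ N / (N:ℝ) := by
          rw [le_div_iff₀ hNpos]; exact hπub i
        calc b N i ^ 2 * π N i
            ≤ ((y N i) ^ 2 / (C₁ ^ 2 * n₀ N)) ^ 2 * (C₂ * n₀ N / (N:ℝ)) := by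
              exact mul_le_mul hbsq hπi (le_of_lt (hπ N i).1) (sq_nonneg _)
          _ = (C₂ / (C₁ ^ 4 * n₀ N * (N:ℝ))) * (y N i) ^ 4 := by
              field_simp
      calc ∑ i, b N i ^ 2 * π N i
          ≤ ∑ i, (C₂ / (C₁ ^ 4 * n₀ N * (N:ℝ))) * (y N i) ^ 4 :=
            Finset.sum_le_sum h1
        _ = (C₂ / (C₁ ^ 4 * n₀ N * (N:ℝ))) * ∑ i, (y N i) ^ 4 := by
            rw [Finset.mul_sum]
        _ ≤ (C₂ / (C₁ ^ 4 * n₀ N * (N:ℝ))) * ((N:ℝ) * Real.sqrt M') := by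
            refine mul_le_mul_of_nonneg_left hsum4 (le_of_lt (div_pos hC₂
              (mul_pos (mul_pos (pow_pos hC₁ 4) hn₀pos) hNpos)))
        _ = C₂ * Real.sqrt M' / (C₁ ^ 4 * n₀ N) := by
            field_simp
        _ ≤ D / A := by
            rw [hDdef, div_div]
            rw [div_le_div_iff₀ (mul_pos (pow_pos hC₁ 4) hn₀pos)
              (mul_pos (mul_pos (pow_pos hC₁ 4) hc₁) hApos)]
            have hnn : 0 ≤ C₂ * Real.sqrt M' := (mul_pos hC₂ (Real.sqrt_pos.2 hM'0)).le
            have hden : C₁ ^ 4 * c₁ * A ≤ C₁ ^ 4 * n₀ N := by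
              nlinarith [pow_pos hC₁ 4]
            nlinarith [mul_le_mul_of_nonneg_left hden hnn]
    set c₄ : ℝ := min (ε / (2 * D)) (1 / E) with hc₄def
    have hc₄pos : 0 < c₄ :=
      lt_min (div_pos hε (mul_pos two_pos hD)) (div_pos one_pos hE)
    have ht : (0:ℝ) ≤ c₄ * Q := (mul_pos hc₄pos hQpos).le
    have htb : ∀ i, (c₄ * Q) * b N i ≤ 1 := by
      intro i
      have h1 : (c₄ * Q) * b N i ≤ (c₄ * Q) * (E * Q / A) :=
        mul_le_mul_of_nonneg_left (hbQle i) ht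
      have h2 : (c₄ * Q) * (E * Q / A) ≤ ((1/E) * Q) * (E * Q / A) := by
        have hc : c₄ ≤ 1/E := min_le_right _ _
        have hcq : c₄ * Q ≤ (1/E) * Q := mul_le_mul_of_nonneg_right hc hQpos.le
        exact mul_le_mul_of_nonneg_right hcq (le_of_lt (div_pos (mul_pos hE hQpos) hApos))
      have h3 : ((1/E) * Q) * (E * Q / A) = Q ^ 2 / A := by
        field_simp [hE.ne', hApos.ne']
      have h4 : Q ^ 2 / A ≤ 1 := by
        rw [div_le_one hApos]
        exact hQ2A
      linarith
    have expo : -(c₄ * Q) * ε + (c₄ * Q) ^ 2 * (D / A) ≤ -(ε * c₄ / 2) * Q := by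
      have e2 : Q ^ 2 / A ≤ Q := by
        rw [div_le_iff₀ hApos]
        nlinarith
      have e3 : (c₄ ^ 2 * D) * (Q ^ 2 / A) ≤ (c₄ ^ 2 * D) * Q :=
        mul_le_mul_of_nonneg_left e2 (mul_nonneg (sq_nonneg _) hD.le)
      have e4 : c₄ ^ 2 * D ≤ (ε / 2) * c₄ := by
        have hc : c₄ ≤ ε / (2 * D) := min_le_left _ _
        rw [le_div_iff₀ (mul_pos two_pos hD)] at hc
        nlinarith [mul_le_mul_of_nonneg_left hc hc₄pos.le]
      have e5 : (c₄ ^ 2 * D) * Q ≤ ((ε / 2) * c₄) * Q :=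
        mul_le_mul_of_nonneg_right e4 hQpos.le
      have e1 : (c₄ * Q) ^ 2 * (D / A) = (c₄ ^ 2 * D) * (Q ^ 2 / A) := by ring
      rw [e1]
      nlinarith
    have hiid : iIndepFun (fun i : Fin N => I N i) ℙ :=
      iIndepFun_precomp (g := Sigma.mk N) sigma_mk_injective hindep
    have main := single_N (fun i => I N i) (fun i => π N i) (fun i => b N i)
      (hmeas N) (h01 N) (hmean N) (hπ N) hiid hbnn ht htb hv ε
    have hseteq : {ω | ε ≤ |S N ω|} = {ω | ε ≤ |∑ i, b N i * (I N i ω - π N i)|} := by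
      ext ω
      rw [Set.mem_setOf_eq, Set.mem_setOf_eq, hSsum N ω]
    rw [hseteq]
    refine main.trans (ENNReal.ofReal_le_ofReal ?_)
    have := Real.exp_le_exp.2 expo
    nlinarith [Real.exp_pos (-(c₄ * Q) * ε + (c₄ * Q) ^ 2 * (D / A))]
  -- a summable dominating sequence
  have key2 : ∀ ε : ℝ, 0 < ε → ∃ K : ℝ, 0 < K ∧ ∀ N : ℕ,
      ℙ {ω | ε ≤ |S N ω|} ≤ ENNReal.ofReal (K / ((N:ℝ) + 1) ^ 2) := by
    intro ε hε
    set c₄ : ℝ := min (ε / (2 * D)) (1 / E) with hc₄def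
    have hc₄pos : 0 < c₄ :=
      lt_min (div_pos hε (mul_pos two_pos hD)) (div_pos one_pos hE)
    set β : ℝ := ε * c₄ / 2 with hβdef
    have hβ : 0 < β := div_pos (mul_pos hε hc₄pos) two_pos
    set G : ℝ := (8 / β) ^ 8 with hGdef
    have hG : 0 < G := pow_pos (div_pos (by norm_num) hβ) 8
    refine ⟨8 * G + 1, by nlinarith, fun N => ?_⟩
    rcases Nat.eq_zero_or_pos N with rfl | hN
    · calc ℙ {ω | ε ≤ |S 0 ω|} ≤ 1 := prob_le_one
        _ ≤ ENNReal.ofReal ((8 * G + 1) / ((0:ℕ) + 1) ^ 2) := by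
            rw [ENNReal.one_le_ofReal]
            push_cast
            rw [le_div_iff₀ (by norm_num)]
            nlinarith [hG]
    · have hN1 : (1:ℝ) ≤ (N:ℝ) := by exact_mod_cast hN
      have hNpos : (0:ℝ) < (N:ℝ) := lt_of_lt_of_le one_pos hN1
      set Q : ℝ := (N:ℝ) ^ ((1:ℝ)/4) with hQdef
      have hQpos : 0 < Q := Real.rpow_pos_of_pos hNpos _
      refine (key ε hε N hN).trans (ENNReal.ofReal_le_ofReal ?_)
      have hQ8 : Q ^ (8:ℕ) = (N:ℝ) ^ (2:ℕ) := by
        rw [hQdef, ← Real.rpow_natCast ((N:ℝ) ^ ((1:ℝ)/4)) 8, ← Real.rpow_mul hNpos.le,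
          ← Real.rpow_natCast (N:ℝ) 2]
        norm_num
      have hexp8 : (Real.exp (β * Q / 8)) ^ (8:ℕ) = Real.exp (β * Q) := by
        rw [← Real.exp_nat_mul]
        congr 1
        push_cast
        ring
      have hxe : β * Q / 8 ≤ Real.exp (β * Q / 8) := by
        nlinarith [Real.add_one_le_exp (β * Q / 8)]
      have hp8 : (β * Q / 8) ^ (8:ℕ) ≤ Real.exp (β * Q) := by
        rw [← hexp8]
        exact pow_le_pow_left₀ (le_of_lt (div_pos (mul_pos hβ hQpos) (by norm_num))) hxe 8
      have hlow : (β / 8) ^ (8:ℕ) * (N:ℝ) ^ 2 ≤ Real.exp (β * Q) := by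
        refine le_trans (le_of_eq ?_) hp8
        rw [← hQ8]
        ring
      have hpos2 : (0:ℝ) < (β / 8) ^ (8:ℕ) * (N:ℝ) ^ 2 :=
        mul_pos (pow_pos (div_pos hβ (by norm_num)) 8) (pow_pos hNpos 2)
      have hinv : Real.exp (-(β * Q)) ≤ ((β / 8) ^ (8:ℕ) * (N:ℝ) ^ 2)⁻¹ := by
        rw [Real.exp_neg]
        exact inv_anti₀ hpos2 hlow
      have hGeq : ((β / 8) ^ (8:ℕ))⁻¹ = G := by
        rw [hGdef, ← inv_pow, inv_div]
      have harg : -(ε * c₄ / 2) * Q = -(β * Q) := by rw [hβdef]; ring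
      rw [harg]
      clear_value c₄ β G Q
      calc 2 * Real.exp (-(β * Q)) ≤ 2 * ((β / 8) ^ (8:ℕ) * (N:ℝ) ^ 2)⁻¹ := by linarith
        _ = 2 * G / (N:ℝ) ^ 2 := by
            rw [mul_inv, ← hGeq]
            ring
        _ ≤ (8 * G + 1) / ((N:ℝ) + 1) ^ 2 := by
            rw [div_le_div_iff₀ (pow_pos hNpos 2)
              (pow_pos (by linarith : (0:ℝ) < (N:ℝ) + 1) 2)]
            have h4 : ((N:ℝ) + 1) ^ 2 ≤ 4 * (N:ℝ) ^ 2 := by nlinarith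
            nlinarith [mul_le_mul_of_nonneg_left h4 hG.le, pow_pos hNpos 2]
  -- Borel-Cantelli
  have bc : ∀ ε : ℝ, 0 < ε → ∀ᵐ ω ∂(ℙ : Measure Ω), ∀ᶠ N in atTop, ¬ (ε ≤ |S N ω|) := by
    intro ε hε
    obtain ⟨K, hK, hKb⟩ := key2 ε hε
    have hsummable : Summable (fun N : ℕ => K / ((N:ℝ) + 1) ^ 2) := by
      have h1 : Summable (fun N : ℕ => 1 / ((N:ℝ) + 1) ^ 2) := by
        have := (summable_nat_add_iff (f := fun n : ℕ => 1 / (n:ℝ) ^ 2) 1).2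
          (Real.summable_one_div_nat_pow.2 one_lt_two)
        refine this.congr fun n => by push_cast; ring
      have := h1.mul_left K
      refine this.congr fun n => by rw [mul_one_div]
    have htsum : (∑' N, ℙ {ω | ε ≤ |S N ω|}) ≠ ⊤ := by
      refine ne_top_of_le_ne_top ?_ (ENNReal.tsum_le_tsum hKb)
      rw [← ENNReal.ofReal_tsum_of_nonneg
        (fun n => le_of_lt (div_pos hK (by positivity))) hsummable]
      exact ENNReal.ofReal_ne_top
    have := MeasureTheory.ae_eventually_notMem (μ := (ℙ : Measure Ω))
      (s := fun N => {ω | ε ≤ |S N ω|}) htsum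
    filter_upwards [this] with ω hω
    exact hω
  have bc2 : ∀ᵐ ω ∂(ℙ : Measure Ω), ∀ k : ℕ,
      ∀ᶠ N in atTop, ¬ ((1 : ℝ) / ((k:ℝ) + 1) ≤ |S N ω|) := by
    rw [MeasureTheory.ae_all_iff]
    intro k
    exact bc _ (by positivity)
  filter_upwards [bc2] with ω hω
  rw [NormedAddCommGroup.tendsto_nhds_zero]
  intro ε hε
  obtain ⟨k, hk⟩ := exists_nat_one_div_lt hε
  filter_upwards [hω k] with N hN
  rw [Real.norm_eq_abs]
  calc |S N ω| < 1 / ((k:ℝ) + 1) := not_le.1 hN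
    _ < ε := hk
end

section
/- Mixed moment bound for SRS indicators: under simple random sampling of size n from N with n/N bounded away from 1, for distinct i, j, k: E[(I_i N/n − 1)(I_j N/n − 1)(I_k N/n − 1)^2] = O(N n^{-2}). -/
open MeasureTheory ProbabilityTheory Filter

set_option maxHeartbeats 1000000 in
private lemma integral_of_01 {Ω : Type*} [MeasureSpace Ω]
    [IsProbabilityMeasure (ℙ : Measure Ω)]
    {f : Ω → ℝ} (hf : Measurable f) (h01 : ∀ ω, f ω = 0 ∨ f ω = 1) :
    Integrable f ℙ ∧ ∫ ω, f ω = (ℙ {ω | f ω = 1}).toReal := by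
  have hs : MeasurableSet {ω | f ω = 1} := hf (measurableSet_singleton 1)
  have heq : f = ({ω | f ω = 1}).indicator (fun _ => (1 : ℝ)) := by
    funext ω
    by_cases h : ω ∈ {ω | f ω = 1}
    · rw [Set.indicator_of_mem h]; exact h
    · rw [Set.indicator_of_notMem h]
      rcases h01 ω with h0 | h1
      · exact h0
      · exact absurd h1 h
  constructor
  · rw [heq]; exact (integrable_const 1).indicator hs
  · conv_lhs => rw [heq]
    exact integral_indicator_one hs

set_option maxHeartbeats 1000000 in
private lemma srs_final_bound (nn NN : ℝ) (hnn4 : 4 ≤ nn) (hNR : 4 ≤ NN) (hnN : nn ≤ NN) :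
    |((NN - 2 * nn) * (NN - nn) * (2 * (NN - nn) - nn * NN)
        - (NN - nn) * nn ^ 2 * (NN - 2)) / (nn ^ 3 * (NN - 1) * (NN - 2))|
      ≤ 14 * NN / nn ^ 2 := by
  have hnnpos : (0 : ℝ) < nn := by linarith
  have hD : (0 : ℝ) < nn ^ 3 * (NN - 1) * (NN - 2) := by
    apply mul_pos (mul_pos (by positivity) (by linarith)) (by linarith)
  rw [abs_div, abs_of_pos hD]
  have b1 : |NN - 2 * nn| ≤ NN := abs_le.mpr ⟨by linarith, by linarith⟩
  have b2 : |NN - nn| ≤ NN := abs_le.mpr ⟨by linarith, by linarith⟩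
  have b3 : |2 * (NN - nn) - nn * NN| ≤ nn * NN :=
    abs_le.mpr ⟨by nlinarith, by nlinarith⟩
  have b5 : |(NN - 2 * nn) * (NN - nn) * (2 * (NN - nn) - nn * NN)| ≤ NN * NN * (nn * NN) := by
    rw [abs_mul, abs_mul]
    exact mul_le_mul (mul_le_mul b1 b2 (abs_nonneg _) (by linarith)) b3
      (abs_nonneg _) (by positivity)
  have b4 : |(NN - nn) * nn ^ 2 * (NN - 2)| ≤ NN * nn ^ 2 * NN := by
    rw [abs_of_nonneg (mul_nonneg (mul_nonneg (by linarith) (sq_nonneg nn)) (by linarith))]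
    have h1 : (NN - nn) * nn ^ 2 ≤ NN * nn ^ 2 :=
      mul_le_mul_of_nonneg_right (by linarith) (sq_nonneg nn)
    have h2 : (0 : ℝ) ≤ (NN - nn) * nn ^ 2 :=
      mul_nonneg (by linarith) (sq_nonneg nn)
    nlinarith
  have hPabs : |(NN - 2 * nn) * (NN - nn) * (2 * (NN - nn) - nn * NN)
      - (NN - nn) * nn ^ 2 * (NN - 2)| ≤ 2 * nn * NN ^ 3 := by
    have htri := abs_sub ((NN - 2 * nn) * (NN - nn) * (2 * (NN - nn) - nn * NN))
      ((NN - nn) * nn ^ 2 * (NN - 2))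
    have hlast : NN * nn ^ 2 * NN ≤ nn * NN ^ 3 := by
      nlinarith [mul_le_mul_of_nonneg_left hnN (mul_nonneg (le_of_lt hnnpos) (sq_nonneg NN))]
    nlinarith
  calc |(NN - 2 * nn) * (NN - nn) * (2 * (NN - nn) - nn * NN)
        - (NN - nn) * nn ^ 2 * (NN - 2)| / (nn ^ 3 * (NN - 1) * (NN - 2))
      ≤ (2 * nn * NN ^ 3) / (nn ^ 3 * (NN - 1) * (NN - 2)) := by gcongr
    _ ≤ 14 * NN / nn ^ 2 := by
        rw [div_le_div_iff₀ hD (by positivity)]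
        have h : NN ^ 2 ≤ 7 * ((NN - 1) * (NN - 2)) := by nlinarith
        have h3 : (0 : ℝ) ≤ 2 * NN * nn ^ 3 := by positivity
        nlinarith [mul_le_mul_of_nonneg_left h h3]

set_option maxHeartbeats 4000000 in
/-- Mixed moment bound for SRS indicators: under simple random sampling of size
`n N` from `N` units, with `n ≍ N^β` for some `β ∈ (1/2,1]` and `n/N ≤ 1-κ`, for
distinct indices `i, j, k, l` one has
`E[(I_i N/n - 1)(I_j N/n - 1)(I_k N/n - 1)²] = O(N n⁻²)`.
Joint inclusion probabilities are hypergeometric: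
`P(all of a set s of ≤ 4 units are sampled) = ∏_{t < |s|} (n - t)/(N - t)`. -/
theorem srs_mixed_product_moment_bound
    (Ω : ℕ → Type*) [∀ N, MeasureSpace (Ω N)]
    [∀ N, IsProbabilityMeasure (ℙ : Measure (Ω N))]
    (n : ℕ → ℕ) (I : (N : ℕ) → Fin N → Ω N → ℝ)
    (hmeas : ∀ N i, Measurable (I N i))
    (h01 : ∀ N i ω, I N i ω = 0 ∨ I N i ω = 1)
    (hhyper : ∀ N : ℕ, ∀ s : Finset (Fin N), s.card ≤ 4 →
      ℙ {ω | ∀ i ∈ s, I N i ω = 1}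
        = ENNReal.ofReal (∏ t ∈ Finset.range s.card, ((n N : ℝ) - t) / ((N : ℝ) - t)))
    (β : ℝ) (hβ : β ∈ Set.Ioc (1 / 2 : ℝ) 1)
    (c₁ c₂ : ℝ) (hc₁ : 0 < c₁)
    (hasymp : ∀ N : ℕ, 1 ≤ N →
      c₁ * (N : ℝ) ^ β ≤ (n N : ℝ) ∧ (n N : ℝ) ≤ c₂ * (N : ℝ) ^ β)
    (κ : ℝ) (hκ : κ ∈ Set.Ioo (0 : ℝ) 1)
    (hfrac : ∀ N : ℕ, 1 ≤ N → (n N : ℝ) / N ≤ 1 - κ) :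
    ∃ (C : ℝ) (N₀ : ℕ), ∀ N : ℕ, N₀ ≤ N →
      ∀ i j k : Fin N, i ≠ j → i ≠ k → j ≠ k →
        |∫ ω, (I N i ω * N / n N - 1) * (I N j ω * N / n N - 1) *
              (I N k ω * N / n N - 1) ^ 2|
          ≤ C * N / (n N : ℝ) ^ 2 := by
  obtain ⟨hβ1, hβ2⟩ := hβ
  obtain ⟨hκ0, hκ1⟩ := hκ
  refine ⟨14, max 4 (⌈(16 / c₁ ^ 2 : ℝ)⌉₊ + 1), ?_⟩
  intro N hN i j k hij hik hjk
  have hN4 : 4 ≤ N := le_trans (le_max_left _ _) hN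
  have hN1 : 1 ≤ N := by omega
  have hNR : (4 : ℝ) ≤ (N : ℝ) := by exact_mod_cast hN4
  have hNpos : (0 : ℝ) < (N : ℝ) := by linarith
  -- n N ≥ 4
  have hceil : (⌈(16 / c₁ ^ 2 : ℝ)⌉₊ + 1 : ℕ) ≤ N := le_trans (le_max_right _ _) hN
  have hc16 : (16 / c₁ ^ 2 : ℝ) ≤ (N : ℝ) := by
    calc (16 / c₁ ^ 2 : ℝ) ≤ (⌈(16 / c₁ ^ 2 : ℝ)⌉₊ : ℝ) := Nat.le_ceil _
      _ ≤ (N : ℝ) := by exact_mod_cast Nat.le_of_succ_le hceil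
  have hsqrt : 4 / c₁ ≤ Real.sqrt (N : ℝ) := by
    rw [Real.le_sqrt (by positivity) (le_of_lt hNpos)]
    have h4 : ((4 : ℝ) / c₁) ^ 2 = 16 / c₁ ^ 2 := by rw [div_pow]; norm_num
    rw [h4]; exact hc16
  have hnn4 : (4 : ℝ) ≤ (n N : ℝ) := by
    have h1 := (hasymp N hN1).1
    have h2 : (N : ℝ) ^ ((1 : ℝ) / 2) ≤ (N : ℝ) ^ β :=
      Real.rpow_le_rpow_of_exponent_le (by exact_mod_cast hN1) (le_of_lt hβ1)
    have h3 : Real.sqrt (N : ℝ) = (N : ℝ) ^ ((1 : ℝ) / 2) := Real.sqrt_eq_rpow _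
    have h5 : (4 : ℝ) ≤ c₁ * Real.sqrt (N : ℝ) := by
      have h6 := mul_le_mul_of_nonneg_left hsqrt (le_of_lt hc₁)
      calc (4 : ℝ) = c₁ * (4 / c₁) := by field_simp
        _ ≤ c₁ * Real.sqrt (N : ℝ) := h6
    calc (4 : ℝ) ≤ c₁ * Real.sqrt (N : ℝ) := h5
      _ ≤ c₁ * (N : ℝ) ^ β := by
          rw [h3]; exact mul_le_mul_of_nonneg_left h2 (le_of_lt hc₁)
      _ ≤ (n N : ℝ) := h1
  have hnnpos : (0 : ℝ) < (n N : ℝ) := by linarith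
  have hnN : (n N : ℝ) ≤ (N : ℝ) := by
    have h := hfrac N hN1
    rw [div_le_iff₀ hNpos] at h
    nlinarith
  -- 0/1 properties of products
  have h01m : ∀ (x y : Fin N) ω, I N x ω * I N y ω = 0 ∨ I N x ω * I N y ω = 1 := by
    intro x y ω
    rcases h01 N x ω with h | h <;> rcases h01 N y ω with h' | h' <;> simp [h, h']
  have h01t : ∀ (x y z : Fin N) ω,
      I N x ω * I N y ω * I N z ω = 0 ∨ I N x ω * I N y ω * I N z ω = 1 := by
    intro x y z ω
    rcases h01 N x ω with h | h <;> rcases h01 N y ω with h' | h' <;>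
      rcases h01 N z ω with h'' | h'' <;> simp [h, h', h'']
  have honem : ∀ (x y : Fin N) ω,
      I N x ω * I N y ω = 1 ↔ I N x ω = 1 ∧ I N y ω = 1 := by
    intro x y ω
    rcases h01 N x ω with h | h <;> rcases h01 N y ω with h' | h' <;> simp [h, h']
  have honet : ∀ (x y z : Fin N) ω,
      I N x ω * I N y ω * I N z ω = 1 ↔
        I N x ω = 1 ∧ I N y ω = 1 ∧ I N z ω = 1 := by
    intro x y z ω
    rcases h01 N x ω with h | h <;> rcases h01 N y ω with h' | h' <;>
      rcases h01 N z ω with h'' | h'' <;> simp [h, h', h'']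
  -- probability values
  have hprob1 : ∀ x : Fin N, ℙ {ω | I N x ω = 1}
      = ENNReal.ofReal ((n N : ℝ) / (N : ℝ)) := by
    intro x
    have h := hhyper N {x} (by norm_num)
    simpa using h
  have hprob2 : ∀ x y : Fin N, x ≠ y →
      ℙ {ω | I N x ω = 1 ∧ I N y ω = 1}
        = ENNReal.ofReal ((n N : ℝ) / (N : ℝ) * (((n N : ℝ) - 1) / ((N : ℝ) - 1))) := by
    intro x y hxy
    have h := hhyper N {x, y} (le_trans (Finset.card_insert_le _ _) (by simp))
    rw [Finset.card_pair hxy] at h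
    rw [show {ω | ∀ t ∈ ({x, y} : Finset (Fin N)), I N t ω = 1}
        = {ω | I N x ω = 1 ∧ I N y ω = 1} from by ext ω; simp] at h
    rw [h]
    congr 1
    rw [Finset.prod_range_succ, Finset.prod_range_one]
    norm_num
  have hprob3 : ℙ {ω | I N i ω = 1 ∧ I N j ω = 1 ∧ I N k ω = 1}
      = ENNReal.ofReal ((n N : ℝ) / (N : ℝ) * (((n N : ℝ) - 1) / ((N : ℝ) - 1))
          * (((n N : ℝ) - 2) / ((N : ℝ) - 2))) := by
    have h := hhyper N {i, j, k} (le_trans (Finset.card_insert_le _ _)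
      (by simp [le_trans (Finset.card_insert_le _ _)]; exact lt_of_le_of_lt (Finset.card_insert_le _ _) (by simp)))
    have hcard : ({i, j, k} : Finset (Fin N)).card = 3 := by
      rw [Finset.card_insert_of_notMem (by simp [hij, hik]), Finset.card_pair hjk]
    rw [hcard] at h
    rw [show {ω | ∀ t ∈ ({i, j, k} : Finset (Fin N)), I N t ω = 1}
        = {ω | I N i ω = 1 ∧ I N j ω = 1 ∧ I N k ω = 1} from by ext ω; simp] at h
    rw [h]
    congr 1
    rw [Finset.prod_range_succ, Finset.prod_range_succ, Finset.prod_range_one]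
    norm_num
  -- nonnegativity of the hypergeometric values
  have hp1nn : (0 : ℝ) ≤ (n N : ℝ) / (N : ℝ) := by positivity
  have hp2nn : (0 : ℝ) ≤ (n N : ℝ) / (N : ℝ) * (((n N : ℝ) - 1) / ((N : ℝ) - 1)) :=
    mul_nonneg hp1nn (div_nonneg (by linarith) (by linarith))
  have hp3nn : (0 : ℝ) ≤ (n N : ℝ) / (N : ℝ) * (((n N : ℝ) - 1) / ((N : ℝ) - 1))
      * (((n N : ℝ) - 2) / ((N : ℝ) - 2)) :=
    mul_nonneg hp2nn (div_nonneg (by linarith) (by linarith))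
  -- integrals of indicator monomials
  obtain ⟨g1, hv1⟩ := integral_of_01 (hmeas N i) (h01 N i)
  obtain ⟨g2, hv2⟩ := integral_of_01 (hmeas N j) (h01 N j)
  obtain ⟨g3, hv3⟩ := integral_of_01 (hmeas N k) (h01 N k)
  obtain ⟨g4, hv4⟩ := integral_of_01 (f := fun ω => I N i ω * I N j ω) ((hmeas N i).mul (hmeas N j)) (h01m i j)
  obtain ⟨g5, hv5⟩ := integral_of_01 (f := fun ω => I N i ω * I N k ω) ((hmeas N i).mul (hmeas N k)) (h01m i k)
  obtain ⟨g6, hv6⟩ := integral_of_01 (f := fun ω => I N j ω * I N k ω) ((hmeas N j).mul (hmeas N k)) (h01m j k)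
  obtain ⟨g7, hv7⟩ := integral_of_01 (f := fun ω => I N i ω * I N j ω * I N k ω)
    (((hmeas N i).mul (hmeas N j)).mul (hmeas N k)) (h01t i j k)
  have hw1 : ∫ ω, I N i ω = (n N : ℝ) / (N : ℝ) := by
    rw [hv1, hprob1 i, ENNReal.toReal_ofReal hp1nn]
  have hw2 : ∫ ω, I N j ω = (n N : ℝ) / (N : ℝ) := by
    rw [hv2, hprob1 j, ENNReal.toReal_ofReal hp1nn]
  have hw3 : ∫ ω, I N k ω = (n N : ℝ) / (N : ℝ) := by
    rw [hv3, hprob1 k, ENNReal.toReal_ofReal hp1nn]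
  have hw4 : ∫ ω, I N i ω * I N j ω
      = (n N : ℝ) / (N : ℝ) * (((n N : ℝ) - 1) / ((N : ℝ) - 1)) := by
    rw [hv4, show {ω | I N i ω * I N j ω = 1} = {ω | I N i ω = 1 ∧ I N j ω = 1}
      from by ext ω; exact honem i j ω, hprob2 i j hij, ENNReal.toReal_ofReal hp2nn]
  have hw5 : ∫ ω, I N i ω * I N k ω
      = (n N : ℝ) / (N : ℝ) * (((n N : ℝ) - 1) / ((N : ℝ) - 1)) := by
    rw [hv5, show {ω | I N i ω * I N k ω = 1} = {ω | I N i ω = 1 ∧ I N k ω = 1}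
      from by ext ω; exact honem i k ω, hprob2 i k hik, ENNReal.toReal_ofReal hp2nn]
  have hw6 : ∫ ω, I N j ω * I N k ω
      = (n N : ℝ) / (N : ℝ) * (((n N : ℝ) - 1) / ((N : ℝ) - 1)) := by
    rw [hv6, show {ω | I N j ω * I N k ω = 1} = {ω | I N j ω = 1 ∧ I N k ω = 1}
      from by ext ω; exact honem j k ω, hprob2 j k hjk, ENNReal.toReal_ofReal hp2nn]
  have hw7 : ∫ ω, I N i ω * I N j ω * I N k ω
      = (n N : ℝ) / (N : ℝ) * (((n N : ℝ) - 1) / ((N : ℝ) - 1))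
        * (((n N : ℝ) - 2) / ((N : ℝ) - 2)) := by
    rw [hv7, show {ω | I N i ω * I N j ω * I N k ω = 1}
        = {ω | I N i ω = 1 ∧ I N j ω = 1 ∧ I N k ω = 1}
      from by ext ω; exact honet i j k ω, hprob3, ENNReal.toReal_ofReal hp3nn]
  -- abbreviations
  set nn : ℝ := (n N : ℝ) with hnndef
  set NN : ℝ := (N : ℝ) with hNNdef
  clear_value nn NN
  obtain ⟨a, ha⟩ : ∃ a : ℝ, a = NN / nn := ⟨_, rfl⟩
  have hkey : ∀ ω, (I N i ω * NN / nn - 1) * (I N j ω * NN / nn - 1) *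
      (I N k ω * NN / nn - 1) ^ 2
      = (a ^ 2 - 2 * a) * a ^ 2 * (I N i ω * I N j ω * I N k ω)
        + (-((a ^ 2 - 2 * a) * a) * (I N i ω * I N k ω)
        + (-((a ^ 2 - 2 * a) * a) * (I N j ω * I N k ω)
        + ((a ^ 2 - 2 * a) * I N k ω
        + (a ^ 2 * (I N i ω * I N j ω)
        + (-a * I N i ω
        + (-a * I N j ω + 1)))))) := by
    intro ω
    rcases h01 N k ω with h | h <;> rw [h, ha] <;> ring
  -- integrability of each summand
  have t7 : Integrable (fun ω => (a ^ 2 - 2 * a) * a ^ 2 *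
      (I N i ω * I N j ω * I N k ω)) ℙ := g7.const_mul _
  have t5 : Integrable (fun ω => -((a ^ 2 - 2 * a) * a) * (I N i ω * I N k ω)) ℙ :=
    g5.const_mul _
  have t6 : Integrable (fun ω => -((a ^ 2 - 2 * a) * a) * (I N j ω * I N k ω)) ℙ :=
    g6.const_mul _
  have t3 : Integrable (fun ω => (a ^ 2 - 2 * a) * I N k ω) ℙ := g3.const_mul _
  have t4 : Integrable (fun ω => a ^ 2 * (I N i ω * I N j ω)) ℙ := g4.const_mul _
  have t1 : Integrable (fun ω => -a * I N i ω) ℙ := g1.const_mul _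
  have t2 : Integrable (fun ω => -a * I N j ω) ℙ := g2.const_mul _
  have u2 : Integrable (fun ω => -a * I N j ω + 1) ℙ := t2.add (integrable_const 1)
  have u1 : Integrable (fun ω => -a * I N i ω + (-a * I N j ω + 1)) ℙ := t1.add u2
  have u4 : Integrable (fun ω => a ^ 2 * (I N i ω * I N j ω)
      + (-a * I N i ω + (-a * I N j ω + 1))) ℙ := t4.add u1
  have u3 : Integrable (fun ω => (a ^ 2 - 2 * a) * I N k ω
      + (a ^ 2 * (I N i ω * I N j ω) + (-a * I N i ω + (-a * I N j ω + 1)))) ℙ := t3.add u4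
  have u6 : Integrable (fun ω => -((a ^ 2 - 2 * a) * a) * (I N j ω * I N k ω)
      + ((a ^ 2 - 2 * a) * I N k ω
      + (a ^ 2 * (I N i ω * I N j ω) + (-a * I N i ω + (-a * I N j ω + 1))))) ℙ := t6.add u3
  have u5 : Integrable (fun ω => -((a ^ 2 - 2 * a) * a) * (I N i ω * I N k ω)
      + (-((a ^ 2 - 2 * a) * a) * (I N j ω * I N k ω)
      + ((a ^ 2 - 2 * a) * I N k ω
      + (a ^ 2 * (I N i ω * I N j ω) + (-a * I N i ω + (-a * I N j ω + 1)))))) ℙ := t5.add u6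
  have hIntVal : ∫ ω, (I N i ω * NN / nn - 1) * (I N j ω * NN / nn - 1) *
      (I N k ω * NN / nn - 1) ^ 2
      = (a ^ 2 - 2 * a) * a ^ 2 * (nn / NN * ((nn - 1) / (NN - 1)) * ((nn - 2) / (NN - 2)))
        + (-((a ^ 2 - 2 * a) * a) * (nn / NN * ((nn - 1) / (NN - 1)))
        + (-((a ^ 2 - 2 * a) * a) * (nn / NN * ((nn - 1) / (NN - 1)))
        + ((a ^ 2 - 2 * a) * (nn / NN)
        + (a ^ 2 * (nn / NN * ((nn - 1) / (NN - 1)))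
        + (-a * (nn / NN)
        + (-a * (nn / NN) + 1)))))) := by
    simp only [hkey]
    rw [integral_add t7 u5, integral_add t5 u6, integral_add t6 u3,
      integral_add t3 u4, integral_add t4 u1, integral_add t1 u2,
      integral_add t2 (integrable_const 1)]
    simp only [MeasureTheory.integral_const_mul]
    rw [hw1, hw2, hw3, hw4, hw5, hw6, hw7, integral_const]
    simp
  rw [hIntVal]
  -- final algebraic bound
  have hNe1 : (NN - 1) ≠ 0 := by linarith
  have hNe2 : (NN - 2) ≠ 0 := by linarith
  have hNne : NN ≠ 0 := ne_of_gt hNpos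
  have hnne : nn ≠ 0 := ne_of_gt hnnpos
  have hD : (0 : ℝ) < nn ^ 3 * (NN - 1) * (NN - 2) := by
    apply mul_pos (mul_pos (by positivity) (by linarith)) (by linarith)
  have hEeq : (a ^ 2 - 2 * a) * a ^ 2 * (nn / NN * ((nn - 1) / (NN - 1)) * ((nn - 2) / (NN - 2)))
        + (-((a ^ 2 - 2 * a) * a) * (nn / NN * ((nn - 1) / (NN - 1)))
        + (-((a ^ 2 - 2 * a) * a) * (nn / NN * ((nn - 1) / (NN - 1)))
        + ((a ^ 2 - 2 * a) * (nn / NN)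
        + (a ^ 2 * (nn / NN * ((nn - 1) / (NN - 1)))
        + (-a * (nn / NN)
        + (-a * (nn / NN) + 1))))))
      = ((NN - 2 * nn) * (NN - nn) * (2 * (NN - nn) - nn * NN)
          - (NN - nn) * nn ^ 2 * (NN - 2)) / (nn ^ 3 * (NN - 1) * (NN - 2)) := by
    rw [ha]
    field_simp
    ring
  rw [hEeq]
  exact srs_final_bound nn NN hnn4 hNR hnN
end
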